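/- Let γ ≥ 1 and μ > 0. There is no C² function v : (0,1) → ℝ with v > 0 satisfying both v''(r) ≤ -μ v(r) r^{-γ} and v'(r) ≤ -μ v(r) r^{1-γ} for all r ∈ (0,1). -/

import Mathlib

open Set

theorem stmt8 (γ μ : ℝ) (hγ : 1 ≤ γ) (hμ : 0 < μ) :
    ¬ ∃ (v v' v'' : ℝ → ℝ),
      (∀ r ∈ Ioo (0:ℝ) 1, HasDerivAt v (v' r) r) ∧
      (∀ r ∈ Ioo (0:ℝ) 1, HasDerivAt v' (v'' r) r) ∧
      ContinuousOn v'' (Ioo (0:ℝ) 1) ∧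
      (∀ r ∈ Ioo (0:ℝ) 1, 0 < v r) ∧
      (∀ r ∈ Ioo (0:ℝ) 1, v'' r ≤ -μ * v r * r ^ (-γ)) ∧
      (∀ r ∈ Ioo (0:ℝ) 1, v' r ≤ -μ * v r * r ^ (1 - γ)) := by
  rintro ⟨v, v', v'', hd1, hd2, _hc, hpos, h2, h1⟩
  have hhalf : (1/2 : ℝ) ∈ Ioo (0:ℝ) 1 := by norm_num
  -- v' is negative on (0,1)
  have hv'neg : ∀ r ∈ Ioo (0:ℝ) 1, v' r < 0 := by
    intro r hr
    have hp : 0 < μ * v r * r ^ (1 - γ) :=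
      mul_pos (mul_pos hμ (hpos r hr)) (Real.rpow_pos_of_pos hr.1 _)
    have := h1 r hr
    linarith
  -- v is strictly decreasing on (0,1)
  have hvanti : StrictAntiOn v (Ioo (0:ℝ) 1) := by
    apply StrictAntiOn.mono (s := Ioo (0:ℝ) 1) ?_ (subset_refl _)
    apply strictAntiOn_of_deriv_neg (convex_Ioo 0 1)
      (fun r hr => (hd1 r hr).continuousAt.continuousWithinAt)
    intro r hr
    rw [interior_Ioo] at hr
    rw [(hd1 r hr).deriv]
    exact hv'neg r hr
  set c : ℝ := μ * v (1/2) with hc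
  have hcpos : 0 < c := mul_pos hμ (hpos _ hhalf)
  -- key bound: v'' s ≤ -(c * s⁻¹) for s ∈ (0, 1/2)
  have hkey : ∀ s ∈ Ioo (0:ℝ) (1/2), v'' s ≤ -(c * s⁻¹) := by
    intro s hs
    have hs1 : s ∈ Ioo (0:ℝ) 1 := ⟨hs.1, by linarith [hs.2]⟩
    have hvs : v (1/2) < v s := hvanti hs1 hhalf hs.2
    have hrpow : s ^ (-1 : ℝ) ≤ s ^ (-γ) :=
      Real.rpow_le_rpow_of_exponent_ge hs.1 (by linarith [hs.2]) (by linarith)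
    rw [Real.rpow_neg_one] at hrpow
    have hinv : 0 < s⁻¹ := inv_pos.mpr hs.1
    have h2s := h2 s hs1
    have hrpos : 0 < s ^ (-γ) := Real.rpow_pos_of_pos hs.1 _
    have : -μ * v s * s ^ (-γ) ≤ -(c * s⁻¹) := by
      rw [hc]
      nlinarith [mul_pos hμ (hpos s hs1), mul_lt_mul_of_pos_left hvs hμ]
    linarith
  -- auxiliary function g = v' + c * log is antitone on [r₀, 1/2]
  set A : ℝ := (v' (1/2) + c * Real.log (1/2)) / c with hA
  set r₀ : ℝ := min (1/4) (Real.exp (A - 1)) with hr₀def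
  have hr₀pos : 0 < r₀ := lt_min (by norm_num) (Real.exp_pos _)
  have hr₀lt : r₀ < 1/2 := lt_of_le_of_lt (min_le_left _ _) (by norm_num)
  have hsub : Icc r₀ (1/2) ⊆ Ioo (0:ℝ) 1 := fun x hx =>
    ⟨lt_of_lt_of_le hr₀pos hx.1, lt_of_le_of_lt hx.2 (by norm_num)⟩
  have hganti : AntitoneOn (fun s => v' s + c * Real.log s) (Icc r₀ (1/2)) := by
    apply antitoneOn_of_deriv_nonpos (convex_Icc _ _)
    · intro s hs
      have hs1 := hsub hs
      have hder : HasDerivAt (fun s => v' s + c * Real.log s) (v'' s + c * s⁻¹) s :=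
        (hd2 s hs1).add ((Real.hasDerivAt_log (ne_of_gt hs1.1)).const_mul c)
      exact hder.continuousAt.continuousWithinAt
    · intro s hs
      rw [interior_Icc] at hs
      have hs1 : s ∈ Ioo (0:ℝ) 1 := hsub ⟨hs.1.le, hs.2.le⟩
      have hder : HasDerivAt (fun s => v' s + c * Real.log s) (v'' s + c * s⁻¹) s :=
        (hd2 s hs1).add ((Real.hasDerivAt_log (ne_of_gt hs1.1)).const_mul c)
      exact (hder.differentiableAt.differentiableWithinAt : _)
    · intro s hs
      rw [interior_Icc] at hs
      have hs1 : s ∈ Ioo (0:ℝ) 1 := hsub ⟨hs.1.le, hs.2.le⟩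
      have hder : HasDerivAt (fun s => v' s + c * Real.log s) (v'' s + c * s⁻¹) s :=
        (hd2 s hs1).add ((Real.hasDerivAt_log (ne_of_gt hs1.1)).const_mul c)
      rw [hder.deriv]
      have := hkey s ⟨hs1.1, hs.2⟩
      linarith
  have hgle := hganti ⟨le_refl _, hr₀lt.le⟩ ⟨hr₀lt.le, le_refl _⟩ hr₀lt.le
  simp only at hgle
  -- log r₀ ≤ A - 1
  have hlog : Real.log r₀ ≤ A - 1 := by
    calc Real.log r₀ ≤ Real.log (Real.exp (A - 1)) :=
          Real.log_le_log hr₀pos (min_le_right _ _)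
      _ = A - 1 := Real.log_exp _
  have hr₀Ioo : r₀ ∈ Ioo (0:ℝ) 1 := ⟨hr₀pos, by linarith⟩
  have hneg := hv'neg r₀ hr₀Ioo
  -- v' r₀ ≥ c * A - c * log r₀ ≥ c > 0, contradiction
  have hAc : c * A = v' (1/2) + c * Real.log (1/2) := by
    rw [hA, mul_div_assoc']
    exact mul_div_cancel_left₀ _ hcpos.ne'
  nlinarith [mul_le_mul_of_nonneg_left hlog hcpos.le]
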